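/- Let X be a real d×n matrix of rank at most r, let X̃ be a real d×n matrix with ‖X̃ − X‖₂ ≤ ε·‖X‖_F for some ε ≥ 0, and let X̂ = X̃_r be the best rank-r approximation of X̃. Then ‖X̂ − X‖_F ≤ 2·sqrt(2r)·ε·‖X‖_F. -/

import Mathlib

open Matrix

/-- Spectral (ℓ2 operator) norm of a matrix. -/
noncomputable def specNorm {p q : ℕ} (M : Matrix (Fin p) (Fin q) ℝ) : ℝ :=
  ‖(Matrix.toEuclideanLin M).toContinuousLinearMap‖

/-- Frobenius norm of a matrix. -/
noncomputable def frobNorm {p q : ℕ} (M : Matrix (Fin p) (Fin q) ℝ) : ℝ :=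
  Real.sqrt (∑ i, ∑ j, M i j ^ 2)

/-- The d×n rectangular "diagonal" matrix with entries s 0 ≥ s 1 ≥ … on the diagonal. -/
def diagDec (d n : ℕ) (s : ℕ → ℝ) : Matrix (Fin d) (Fin n) ℝ :=
  Matrix.of fun i j => if (i : ℕ) = (j : ℕ) then s i else 0

/-- The same diagonal matrix truncated to its first k diagonal entries. -/
def diagTrunc (d n : ℕ) (s : ℕ → ℝ) (k : ℕ) : Matrix (Fin d) (Fin n) ℝ :=
  Matrix.of fun i j => if (i : ℕ) = (j : ℕ) ∧ (i : ℕ) < k then s i else 0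

/-- A singular value decomposition M = U·Σ·Vᵀ of a d×n real matrix M: U and V are orthogonal
and the diagonal entries of Σ are the singular values σ₁ ≥ σ₂ ≥ … ≥ 0.  Every real matrix
admits such a decomposition. -/
structure SVDData (d n : ℕ) (M : Matrix (Fin d) (Fin n) ℝ) where
  U : Matrix (Fin d) (Fin d) ℝ
  V : Matrix (Fin n) (Fin n) ℝ
  s : ℕ → ℝ
  orthU : Uᵀ * U = 1
  orthV : Vᵀ * V = 1
  nonneg : ∀ i, 0 ≤ s i
  anti : ∀ i j, i ≤ j → s j ≤ s i
  eq : M = U * diagDec d n s * Vᵀ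

/-- The best rank-k approximation M_k of M: the truncated SVD keeping the top k singular
values. -/
def SVDData.trunc {d n : ℕ} {M : Matrix (Fin d) (Fin n) ℝ} (sd : SVDData d n M) (k : ℕ) :
    Matrix (Fin d) (Fin n) ℝ :=
  sd.U * diagTrunc d n sd.s k * sd.Vᵀ

section AuxERRB
open scoped Matrix.Norms.L2Operator

lemma specNorm_eq {p q : ℕ} (M : Matrix (Fin p) (Fin q) ℝ) : specNorm M = ‖M‖ := rfl

noncomputable def nrm {p : ℕ} (v : Fin p → ℝ) : ℝ := Real.sqrt (∑ i, v i ^ 2)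

lemma nrm_eq_norm {p : ℕ} (v : Fin p → ℝ) :
    nrm v = ‖(WithLp.equiv 2 (Fin p → ℝ)).symm v‖ := by
  rw [EuclideanSpace.norm_eq]
  simp [nrm, sq_abs]

lemma nrm_nonneg {p : ℕ} (v : Fin p → ℝ) : 0 ≤ nrm v := Real.sqrt_nonneg _

lemma nrm_sq {p : ℕ} (v : Fin p → ℝ) : nrm v ^ 2 = ∑ i, v i ^ 2 :=
  Real.sq_sqrt (Finset.sum_nonneg fun _ _ => sq_nonneg _)

lemma nrm_pos {p : ℕ} (v : Fin p → ℝ) (hv : v ≠ 0) : 0 < nrm v := by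
  rw [nrm_eq_norm, norm_pos_iff]
  simpa using hv

lemma mulVec_nrm_le {p q : ℕ} (M : Matrix (Fin p) (Fin q) ℝ) (v : Fin q → ℝ) :
    nrm (M *ᵥ v) ≤ ‖M‖ * nrm v := by
  rw [nrm_eq_norm, nrm_eq_norm]
  exact Matrix.l2_opNorm_mulVec M ((WithLp.equiv 2 (Fin q → ℝ)).symm v)

lemma specNorm_le_bound {p q : ℕ} (M : Matrix (Fin p) (Fin q) ℝ) {C : ℝ} (hC : 0 ≤ C)
    (h : ∀ v, nrm (M *ᵥ v) ≤ C * nrm v) : ‖M‖ ≤ C := by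
  rw [Matrix.l2_opNorm_def]
  apply ContinuousLinearMap.opNorm_le_bound _ hC
  intro x
  have := h ((WithLp.equiv 2 (Fin q → ℝ)) x)
  rw [nrm_eq_norm, nrm_eq_norm] at this
  exact this

lemma orth_mulVec_nrm {p q : ℕ} (U : Matrix (Fin p) (Fin q) ℝ) (hU : Uᵀ * U = 1)
    (v : Fin q → ℝ) : nrm (U *ᵥ v) = nrm v := by
  have hdot : (U *ᵥ v) ⬝ᵥ (U *ᵥ v) = v ⬝ᵥ v := by
    rw [dotProduct_mulVec, ← Matrix.mulVec_transpose, Matrix.mulVec_mulVec, hU,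
      Matrix.one_mulVec]
  have h2 : ∑ i, (U *ᵥ v) i ^ 2 = ∑ i, v i ^ 2 := by
    simpa [dotProduct, pow_two] using hdot
  unfold nrm
  rw [h2]

lemma orth_specNorm_le_one {p q : ℕ} (U : Matrix (Fin p) (Fin q) ℝ) (hU : Uᵀ * U = 1) :
    ‖U‖ ≤ 1 := by
  apply specNorm_le_bound U zero_le_one
  intro v
  rw [orth_mulVec_nrm U hU, one_mul]

lemma diagDec_mulVec {d n : ℕ} (t : ℕ → ℝ) (w : Fin n → ℝ) (i : Fin d) :
    (diagDec d n t *ᵥ w) i = if h : (i : ℕ) < n then t i * w ⟨i, h⟩ else 0 := by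
  rw [Matrix.mulVec, dotProduct]
  by_cases h : (i : ℕ) < n
  · rw [dif_pos h, Finset.sum_eq_single (⟨(i : ℕ), h⟩ : Fin n)]
    · simp [diagDec]
    · intro b _ hb
      have : (i : ℕ) ≠ (b : ℕ) := fun hc => hb (by ext; exact hc.symm)
      simp [diagDec, this]
    · simp
  · rw [dif_neg h]
    apply Finset.sum_eq_zero
    intro j _
    have : (i : ℕ) ≠ (j : ℕ) := fun hc => h (hc ▸ j.isLt)
    simp [diagDec, this]

lemma spec_diagDec_le {d n : ℕ} (t : ℕ → ℝ) {c : ℝ} (hc : 0 ≤ c)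
    (h : ∀ i, i < d → i < n → |t i| ≤ c) : ‖diagDec d n t‖ ≤ c := by
  apply specNorm_le_bound _ hc
  intro v
  apply le_of_sq_le_sq _ (mul_nonneg hc (nrm_nonneg v))
  rw [mul_pow, nrm_sq, nrm_sq]
  calc ∑ i : Fin d, ((diagDec d n t *ᵥ v) i) ^ 2
      ≤ ∑ i : Fin d, (fun a : ℕ => if h2 : a < n then c ^ 2 * v ⟨a, h2⟩ ^ 2 else 0) (i : ℕ) := by
        apply Finset.sum_le_sum
        intro i _
        rw [diagDec_mulVec]
        by_cases h2 : (i : ℕ) < n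
        · show _ ≤ if h2 : (i:ℕ) < n then c ^ 2 * v ⟨(i:ℕ), h2⟩ ^ 2 else 0
          rw [dif_pos h2, dif_pos h2, mul_pow]
          by_cases h3 : (i : ℕ) < d
          · exact mul_le_mul_of_nonneg_right (by
              have := h i h3 h2
              nlinarith [abs_nonneg (t (i:ℕ)), sq_abs (t (i:ℕ))]) (sq_nonneg _)
          · exact absurd i.isLt h3
        · show _ ≤ if h2 : (i:ℕ) < n then c ^ 2 * v ⟨(i:ℕ), h2⟩ ^ 2 else 0
          rw [dif_neg h2, dif_neg h2]; norm_num
    _ = ∑ a ∈ Finset.range d, (fun a : ℕ => if h2 : a < n then c ^ 2 * v ⟨a, h2⟩ ^ 2 else 0) a :=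
        Fin.sum_univ_eq_sum_range (fun a : ℕ => if h2 : a < n then c ^ 2 * v ⟨a, h2⟩ ^ 2 else 0) d
    _ ≤ ∑ a ∈ Finset.range (max d n), (fun a : ℕ => if h2 : a < n then c ^ 2 * v ⟨a, h2⟩ ^ 2 else 0) a := by
        apply Finset.sum_le_sum_of_subset_of_nonneg
        · exact Finset.range_subset_range.mpr (le_max_left _ _)
        · intro a _ _
          by_cases h2 : a < n
          · rw [dif_pos h2]; positivity
          · rw [dif_neg h2]
    _ = ∑ a ∈ Finset.range n, (fun a : ℕ => if h2 : a < n then c ^ 2 * v ⟨a, h2⟩ ^ 2 else 0) a := by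
        symm
        apply Finset.sum_subset (Finset.range_subset_range.mpr (le_max_right _ _))
        intro a _ ha
        rw [Finset.mem_range] at ha
        rw [dif_neg ha]
    _ = ∑ j : Fin n, c ^ 2 * v j ^ 2 := by
        rw [← Fin.sum_univ_eq_sum_range]
        apply Finset.sum_congr rfl
        intro j _
        rw [dif_pos j.isLt]
    _ = c ^ 2 * ∑ j, v j ^ 2 := by rw [Finset.mul_sum]

lemma frobNorm_nonneg {p q : ℕ} (M : Matrix (Fin p) (Fin q) ℝ) : 0 ≤ frobNorm M :=
  Real.sqrt_nonneg _

lemma frobNorm_sq {p q : ℕ} (M : Matrix (Fin p) (Fin q) ℝ) :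
    frobNorm M ^ 2 = ∑ i, ∑ j, M i j ^ 2 :=
  Real.sq_sqrt (Finset.sum_nonneg fun _ _ => Finset.sum_nonneg fun _ _ => sq_nonneg _)

lemma spec_transpose {p q : ℕ} (M : Matrix (Fin p) (Fin q) ℝ) : ‖Mᵀ‖ = ‖M‖ := by
  rw [← Matrix.conjTranspose_eq_transpose_of_trivial]
  exact Matrix.l2_opNorm_conjTranspose M

lemma frob_le_sqrt_rank_mul_spec {p q : ℕ} (M : Matrix (Fin p) (Fin q) ℝ) (k : ℕ)
    (hk : M.rank ≤ k) : frobNorm M ≤ Real.sqrt k * ‖M‖ := by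
  classical
  set e := (WithLp.linearEquiv 2 ℝ (Fin p → ℝ)).symm with he
  set W : Submodule ℝ (EuclideanSpace ℝ (Fin p)) :=
    (LinearMap.range M.mulVecLin).map (e : (Fin p → ℝ) →ₗ[ℝ] EuclideanSpace ℝ (Fin p)) with hWdef
  have hfinW : Module.finrank ℝ W ≤ k := by
    rw [hWdef, LinearEquiv.finrank_map_eq]
    exact hk
  set m := Module.finrank ℝ W with hm
  let b := stdOrthonormalBasis ℝ W
  -- columns of M are in W
  have hcol : ∀ j : Fin q, (WithLp.equiv 2 (Fin p → ℝ)).symm (fun i => M i j) ∈ W := by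
    intro j
    refine ⟨M *ᵥ Pi.single j 1, LinearMap.mem_range_self _ _, ?_⟩
    have : M *ᵥ Pi.single j 1 = fun i => M i j := by
      rw [Matrix.mulVec_single]
      simp
      rfl
    rw [this]
    rfl
  -- Parseval within W
  have hpars : ∀ (x : EuclideanSpace ℝ (Fin p)) (hx : x ∈ W),
      ‖x‖ ^ 2 = ∑ i : Fin m, (inner ℝ ((b i : EuclideanSpace ℝ (Fin p))) x : ℝ) ^ 2 := by
    intro x hx
    have h1 : ‖x‖ = ‖(⟨x, hx⟩ : W)‖ := rfl
    rw [h1, ← LinearIsometryEquiv.norm_map b.repr, EuclideanSpace.norm_eq]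
    rw [Real.sq_sqrt (Finset.sum_nonneg fun _ _ => sq_nonneg _)]
    apply Finset.sum_congr rfl
    intro i _
    rw [Real.norm_eq_abs, sq_abs, b.repr_apply_apply]
    rfl
  -- Frobenius as sum over columns, then swap
  have hfr : frobNorm M ^ 2 ≤ m * ‖M‖ ^ 2 := by
    rw [frobNorm_sq, Finset.sum_comm]
    have hcolnorm : ∀ j : Fin q, ∑ i, M i j ^ 2 =
        ‖(WithLp.equiv 2 (Fin p → ℝ)).symm (fun i => M i j)‖ ^ 2 := by
      intro j
      rw [EuclideanSpace.norm_eq, Real.sq_sqrt (Finset.sum_nonneg fun _ _ => sq_nonneg _)]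
      apply Finset.sum_congr rfl
      intro i _
      rw [Real.norm_eq_abs, sq_abs]
      rfl
    calc ∑ j, ∑ i, M i j ^ 2
        = ∑ j : Fin q, ∑ i : Fin m,
            (inner ℝ ((b i : EuclideanSpace ℝ (Fin p)))
              ((WithLp.equiv 2 (Fin p → ℝ)).symm (fun i => M i j)) : ℝ) ^ 2 := by
          apply Finset.sum_congr rfl
          intro j _
          rw [hcolnorm j, hpars _ (hcol j)]
      _ = ∑ i : Fin m, ∑ j : Fin q,
            ((Mᵀ *ᵥ (fun t => (b i : EuclideanSpace ℝ (Fin p)) t)) j) ^ 2 := by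
          rw [Finset.sum_comm]
          apply Finset.sum_congr rfl; intro i _
          apply Finset.sum_congr rfl; intro j _
          congr 1
      _ ≤ ∑ i : Fin m, ‖M‖ ^ 2 := by
          apply Finset.sum_le_sum
          intro i _
          have h2 := mulVec_nrm_le Mᵀ (fun t => (b i : EuclideanSpace ℝ (Fin p)) t)
          have h3 : nrm (fun t => (b i : EuclideanSpace ℝ (Fin p)) t) = 1 := by
            rw [nrm_eq_norm]
            have : (WithLp.equiv 2 (Fin p → ℝ)).symm
                (fun t => (b i : EuclideanSpace ℝ (Fin p)) t) =
                (b i : EuclideanSpace ℝ (Fin p)) := rfl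
            rw [this]
            rw [show ‖(b i : EuclideanSpace ℝ (Fin p))‖ = ‖b i‖ from rfl]
            exact b.orthonormal.1 i
          rw [h3, mul_one, spec_transpose] at h2
          calc ∑ j : Fin q, ((Mᵀ *ᵥ (fun t => (b i : EuclideanSpace ℝ (Fin p)) t)) j) ^ 2
              = nrm (Mᵀ *ᵥ (fun t => (b i : EuclideanSpace ℝ (Fin p)) t)) ^ 2 := (nrm_sq _).symm
            _ ≤ ‖M‖ ^ 2 := by
                have := nrm_nonneg (Mᵀ *ᵥ (fun t => (b i : EuclideanSpace ℝ (Fin p)) t))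
                nlinarith
      _ = m * ‖M‖ ^ 2 := by rw [Finset.sum_const, Finset.card_univ, Fintype.card_fin, nsmul_eq_mul]
  -- conclude
  have h4 : frobNorm M ^ 2 ≤ (Real.sqrt k * ‖M‖) ^ 2 := by
    rw [mul_pow, Real.sq_sqrt (Nat.cast_nonneg k)]
    calc frobNorm M ^ 2 ≤ m * ‖M‖ ^ 2 := hfr
      _ ≤ k * ‖M‖ ^ 2 := by
          apply mul_le_mul_of_nonneg_right _ (sq_nonneg _)
          exact_mod_cast hfinW
  exact le_of_sq_le_sq h4 (mul_nonneg (Real.sqrt_nonneg _) (norm_nonneg _))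

lemma rank_sub_le {p q : ℕ} (A B : Matrix (Fin p) (Fin q) ℝ) :
    (A - B).rank ≤ A.rank + B.rank := by
  have hle : LinearMap.range (A - B).mulVecLin ≤
      LinearMap.range A.mulVecLin ⊔ LinearMap.range B.mulVecLin := by
    rintro x ⟨v, rfl⟩
    rw [Matrix.mulVecLin_apply, Matrix.sub_mulVec]
    exact Submodule.sub_mem _
      (Submodule.mem_sup_left (LinearMap.mem_range_self _ v))
      (Submodule.mem_sup_right (LinearMap.mem_range_self _ v))
  have h1 : (A - B).rank ≤ Module.finrank ℝ ↥(LinearMap.range A.mulVecLin ⊔ LinearMap.range B.mulVecLin) :=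
    Submodule.finrank_mono hle
  exact h1.trans (Submodule.finrank_add_le_finrank_add_finrank _ _)

lemma rank_diagTrunc_le (d n k : ℕ) (s : ℕ → ℝ) : (diagTrunc d n s k).rank ≤ k := by
  classical
  let A : Matrix (Fin d) (Fin k) ℝ := Matrix.of fun i a => if (i : ℕ) = (a : ℕ) then s i else 0
  let B : Matrix (Fin k) (Fin n) ℝ := Matrix.of fun a j => if (a : ℕ) = (j : ℕ) then 1 else 0
  have hAB : diagTrunc d n s k = A * B := by
    ext i j
    rw [Matrix.mul_apply]
    rcases Nat.lt_or_ge (i : ℕ) k with h | h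
    · rw [Finset.sum_eq_single (⟨(i : ℕ), h⟩ : Fin k)]
      · simp only [A, B, Matrix.of_apply, diagTrunc]
        by_cases hij : (i : ℕ) = (j : ℕ)
        · have hjk : (j : ℕ) < k := hij ▸ h
          simp [hij, hjk]
        · simp [hij]
      · intro b _ hb
        have : (i : ℕ) ≠ (b : ℕ) := fun hc => hb (by ext; exact hc.symm)
        simp [A, B, this]
      · simp
    · rw [Finset.sum_eq_zero]
      · simp only [diagTrunc, Matrix.of_apply]
        have : ¬((i : ℕ) = (j : ℕ) ∧ (i : ℕ) < k) := fun hc => absurd hc.2 (not_lt.mpr h)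
        rw [if_neg this]
      · intro a _
        have : (i : ℕ) ≠ (a : ℕ) := fun hc => absurd (hc ▸ a.isLt) (not_lt.mpr h)
        simp [A, B, this]
  rw [hAB]
  exact le_trans (Matrix.rank_mul_le_left A B)
    (le_trans (Matrix.rank_le_card_width A) (by simp))

lemma dotProduct_finsum {m ι : Type*} [Fintype m] [Fintype ι] (u : m → ℝ) (f : ι → m → ℝ) :
    u ⬝ᵥ (∑ i, f i) = ∑ i, u ⬝ᵥ f i := by
  simp only [dotProduct, Finset.sum_apply, Finset.mul_sum]
  rw [Finset.sum_comm]

lemma weyl {d n r : ℕ} (X Xt : Matrix (Fin d) (Fin n) ℝ) (hrank : X.rank ≤ r)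
    (sd : SVDData d n Xt) (hd : r < d) (hn : r < n) :
    sd.s r ≤ ‖Xt - X‖ := by
  classical
  -- kernel dimension
  have hker : n ≤ r + Module.finrank ℝ (LinearMap.ker X.mulVecLin) := by
    have h1 := LinearMap.finrank_range_add_finrank_ker X.mulVecLin
    rw [Module.finrank_fintype_fun_eq_card, Fintype.card_fin] at h1
    have h2 : Module.finrank ℝ (LinearMap.range X.mulVecLin) ≤ r := hrank
    omega
  -- columns of V
  let col : Fin (r + 1) → (Fin n → ℝ) := fun i => fun j => sd.V j ⟨(i : ℕ), by omega⟩
  have horth : ∀ a b : Fin n,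
      ∑ j, sd.V j a * sd.V j b = if a = b then 1 else 0 := by
    intro a b
    have h3 := congrFun (congrFun sd.orthV a) b
    simpa [Matrix.mul_apply, Matrix.one_apply, Matrix.transpose_apply] using h3
  have hli : LinearIndependent ℝ col := by
    rw [Fintype.linearIndependent_iff]
    intro c hc k
    have h0 := congrArg (fun w => (fun j => sd.V j ⟨(k : ℕ), by omega⟩) ⬝ᵥ w) hc
    simp only [dotProduct_zero] at h0
    rw [dotProduct_finsum] at h0
    rw [Finset.sum_eq_single k] at h0
    · rw [dotProduct_smul] at h0
      have h5 : (fun j => sd.V j ⟨(k : ℕ), by omega⟩) ⬝ᵥ col k = 1 := by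
        rw [dotProduct]
        have := horth ⟨(k : ℕ), by omega⟩ ⟨(k : ℕ), by omega⟩
        simpa [col] using this
      rw [h5] at h0
      simpa using h0
    · intro i _ hik
      rw [dotProduct_smul]
      have h5 : (fun j => sd.V j ⟨(k : ℕ), by omega⟩) ⬝ᵥ col i = 0 := by
        rw [dotProduct]
        have h6 := horth ⟨(k : ℕ), by omega⟩ ⟨(i : ℕ), by omega⟩
        have h7 : (⟨(k : ℕ), by omega⟩ : Fin n) ≠ ⟨(i : ℕ), by omega⟩ := by
          intro hc2
          have hval : (k : ℕ) = (i : ℕ) := by simpa using congrArg Fin.val hc2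
          exact hik (Fin.ext hval.symm)
        rw [if_neg h7] at h6
        simpa [col] using h6
      rw [h5, smul_eq_mul, mul_zero]
    · intro hk
      exact absurd (Finset.mem_univ k) hk
  set W := Submodule.span ℝ (Set.range col) with hWdef
  have hW : Module.finrank ℝ W = r + 1 := by
    rw [hWdef, finrank_span_eq_card hli, Fintype.card_fin]
  have hinf : LinearMap.ker X.mulVecLin ⊓ W ≠ ⊥ := by
    intro hbot
    have h2 := Submodule.finrank_sup_add_finrank_inf_eq (LinearMap.ker X.mulVecLin) W
    have h3 : Module.finrank ℝ ↥(LinearMap.ker X.mulVecLin ⊔ W) ≤ n := by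
      have := Submodule.finrank_le (LinearMap.ker X.mulVecLin ⊔ W)
      rwa [Module.finrank_fintype_fun_eq_card, Fintype.card_fin] at this
    rw [hbot, finrank_bot] at h2
    omega
  obtain ⟨v, hvmem, hv0⟩ := Submodule.exists_mem_ne_zero_of_ne_bot hinf
  obtain ⟨hvK', hvW⟩ := Submodule.mem_inf.mp hvmem
  have hvK : X *ᵥ v = 0 := by
    rwa [LinearMap.mem_ker, Matrix.mulVecLin_apply] at hvK'
  obtain ⟨c, hvc⟩ := (Submodule.mem_span_range_iff_exists_fun ℝ).mp hvW
  set w := sd.Vᵀ *ᵥ v with hwdef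
  have hw0 : ∀ k : Fin n, r < (k : ℕ) → w k = 0 := by
    intro k hk
    have h8 : w k = (fun j => sd.V j k) ⬝ᵥ v := by
      rw [hwdef, Matrix.mulVec]
      rfl
    rw [h8, ← hvc, dotProduct_finsum]
    apply Finset.sum_eq_zero
    intro i _
    rw [dotProduct_smul]
    have h9 := horth k ⟨(i : ℕ), by omega⟩
    have h10 : k ≠ (⟨(i : ℕ), by omega⟩ : Fin n) := by
      intro hc2
      have := congrArg Fin.val hc2
      simp at this
      omega
    rw [if_neg h10] at h9
    have h11 : (fun j => sd.V j k) ⬝ᵥ col i = 0 := by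
      rw [dotProduct]
      simpa [col] using h9
    rw [h11, smul_eq_mul, mul_zero]
  have hnw : nrm w = nrm v := by
    apply orth_mulVec_nrm
    rw [Matrix.transpose_transpose]
    exact mul_eq_one_comm.mp sd.orthV
  -- key sum inequality
  have hkey : (sd.s r) ^ 2 * nrm w ^ 2 ≤ nrm (diagDec d n sd.s *ᵥ w) ^ 2 := by
    rw [nrm_sq, nrm_sq]
    set F : ℕ → ℝ := fun a => if h2 : a < n then (sd.s a * w ⟨a, h2⟩) ^ 2 else 0 with hF
    set G : ℕ → ℝ := fun a => if h2 : a < n then w ⟨a, h2⟩ ^ 2 else 0 with hG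
    have hFnn : ∀ a, 0 ≤ F a := by
      intro a
      show 0 ≤ if h2 : a < n then (sd.s a * w ⟨a, h2⟩) ^ 2 else 0
      by_cases h2 : a < n
      · rw [dif_pos h2]; positivity
      · rw [dif_neg h2]
    have hstep2 : ∑ i : Fin d, ((diagDec d n sd.s *ᵥ w) i) ^ 2 = ∑ a ∈ Finset.range d, F a := by
      rw [← Fin.sum_univ_eq_sum_range F d]
      apply Finset.sum_congr rfl
      intro i _
      rw [diagDec_mulVec]
      by_cases h2 : (i : ℕ) < n
      · rw [dif_pos h2]
        show _ = if h2 : (i : ℕ) < n then (sd.s i * w ⟨(i : ℕ), h2⟩) ^ 2 else 0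
        rw [dif_pos h2]
      · rw [dif_neg h2]
        show _ = if h2 : (i : ℕ) < n then (sd.s i * w ⟨(i : ℕ), h2⟩) ^ 2 else 0
        rw [dif_neg h2]
        norm_num
    have hstep5 : ∑ k : Fin n, w k ^ 2 = ∑ a ∈ Finset.range (r + 1), G a := by
      have hGi : ∀ k : Fin n, G (k : ℕ) = w k ^ 2 := by
        intro k
        show (if h2 : (k : ℕ) < n then w ⟨(k : ℕ), h2⟩ ^ 2 else 0) = w k ^ 2
        rw [dif_pos k.isLt]
      calc ∑ k : Fin n, w k ^ 2
          = ∑ k : Fin n, G (k : ℕ) := Finset.sum_congr rfl fun k _ => (hGi k).symm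
        _ = ∑ a ∈ Finset.range n, G a := Fin.sum_univ_eq_sum_range G n
        _ = ∑ a ∈ Finset.range (r + 1), G a := by
            symm
            apply Finset.sum_subset (Finset.range_subset_range.mpr (by omega))
            intro a ha har
            rw [Finset.mem_range] at ha
            rw [Finset.mem_range, not_lt] at har
            show (if h2 : a < n then w ⟨a, h2⟩ ^ 2 else 0) = 0
            rw [dif_pos ha, hw0 ⟨a, ha⟩ (by show r < a; omega)]
            norm_num
    rw [hstep2, hstep5, Finset.mul_sum]
    calc ∑ a ∈ Finset.range (r + 1), sd.s r ^ 2 * G a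
        ≤ ∑ a ∈ Finset.range (r + 1), F a := by
          apply Finset.sum_le_sum
          intro a ha
          rw [Finset.mem_range] at ha
          have han : a < n := by omega
          show sd.s r ^ 2 * (if h2 : a < n then w ⟨a, h2⟩ ^ 2 else 0) ≤
            (if h2 : a < n then (sd.s a * w ⟨a, h2⟩) ^ 2 else 0)
          rw [dif_pos han, dif_pos han, mul_pow]
          apply mul_le_mul_of_nonneg_right _ (sq_nonneg _)
          have hsa : sd.s r ≤ sd.s a := sd.anti a r (by omega)
          have hs0 : 0 ≤ sd.s r := sd.nonneg r
          nlinarith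
      _ ≤ ∑ a ∈ Finset.range d, F a :=
          Finset.sum_le_sum_of_subset_of_nonneg (Finset.range_subset_range.mpr (by omega))
            (fun a _ _ => hFnn a)
  -- finish
  have hXtv : Xt *ᵥ v = sd.U *ᵥ (diagDec d n sd.s *ᵥ w) := by
    conv_lhs => rw [sd.eq]
    rw [← Matrix.mulVec_mulVec, ← Matrix.mulVec_mulVec]
  have h12 : nrm (Xt *ᵥ v) = nrm (diagDec d n sd.s *ᵥ w) := by
    rw [hXtv, orth_mulVec_nrm sd.U sd.orthU]
  have h13 : sd.s r * nrm v ≤ nrm (Xt *ᵥ v) := by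
    apply le_of_sq_le_sq _ (nrm_nonneg _)
    rw [h12, mul_pow, ← hnw]
    exact hkey
  have h14 : (Xt - X) *ᵥ v = Xt *ᵥ v := by
    rw [Matrix.sub_mulVec, hvK, sub_zero]
  have h15 : nrm (Xt *ᵥ v) ≤ ‖Xt - X‖ * nrm v := by
    rw [← h14]
    exact mulVec_nrm_le _ _
  have h16 : sd.s r * nrm v ≤ ‖Xt - X‖ * nrm v := h13.trans h15
  exact le_of_mul_le_mul_right h16 (nrm_pos v hv0)

lemma sandwich_spec_le {d n : ℕ} (U : Matrix (Fin d) (Fin d) ℝ) (V : Matrix (Fin n) (Fin n) ℝ)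
    (A : Matrix (Fin d) (Fin n) ℝ) (hU : Uᵀ * U = 1) (hV : Vᵀ * V = 1) :
    ‖U * A * Vᵀ‖ ≤ ‖A‖ := by
  have hVt : ‖Vᵀ‖ ≤ 1 := by
    apply orth_specNorm_le_one
    rw [Matrix.transpose_transpose]
    exact mul_eq_one_comm.mp hV
  have hU1 : ‖U‖ ≤ 1 := orth_specNorm_le_one U hU
  calc ‖U * A * Vᵀ‖ ≤ ‖U * A‖ * ‖Vᵀ‖ := Matrix.l2_opNorm_mul _ _
    _ ≤ ‖U * A‖ * 1 := mul_le_mul_of_nonneg_left hVt (norm_nonneg _)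
    _ = ‖U * A‖ := mul_one _
    _ ≤ ‖U‖ * ‖A‖ := Matrix.l2_opNorm_mul _ _
    _ ≤ 1 * ‖A‖ := mul_le_mul_of_nonneg_right hU1 (norm_nonneg _)
    _ = ‖A‖ := one_mul _


/-- Proposition 1 (exactly low-rank case): if X is a real d×n matrix of rank at most r, X̃
satisfies ‖X̃ − X‖₂ ≤ ε·‖X‖_F with ε ≥ 0, and X̂ = X̃_r is the best rank-r approximation
(truncated SVD) of X̃, then ‖X̂ − X‖_F ≤ 2·sqrt(2r)·ε·‖X‖_F. -/
theorem exact_rank_recovery_bound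
    {d n : ℕ} (X Xt : Matrix (Fin d) (Fin n) ℝ) (r : ℕ)
    (hrank : X.rank ≤ r)
    (ε : ℝ) (hε : 0 ≤ ε) (h : specNorm (Xt - X) ≤ ε * frobNorm X)
    (sXt : SVDData d n Xt) :
    frobNorm (sXt.trunc r - X) ≤ 2 * Real.sqrt (2 * r) * ε * frobNorm X := by
  have hE : ‖Xt - X‖ ≤ ε * frobNorm X := by rw [← specNorm_eq]; exact h
  -- difference of truncation
  have hdiff : sXt.trunc r - Xt =
      sXt.U * diagDec d n (fun i => if i < r then 0 else -(sXt.s i)) * sXt.Vᵀ := by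
    have hTS : diagTrunc d n sXt.s r - diagDec d n sXt.s =
        diagDec d n (fun i => if i < r then 0 else -(sXt.s i)) := by
      ext i j
      simp only [Matrix.sub_apply, diagTrunc, diagDec, Matrix.of_apply]
      by_cases hij : (i : ℕ) = (j : ℕ)
      · by_cases hir : (j : ℕ) < r
        · simp [hij, hir]
        · simp [hij, hir]
      · simp [hij]
    have h2 : sXt.trunc r - Xt = sXt.trunc r - sXt.U * diagDec d n sXt.s * sXt.Vᵀ := by
      rw [← sXt.eq]
    rw [h2, SVDData.trunc, ← Matrix.sub_mul, ← Matrix.mul_sub, hTS]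
  have hYXt : ‖sXt.trunc r - Xt‖ ≤ ‖Xt - X‖ := by
    by_cases hcase : r < d ∧ r < n
    · have hw := weyl X Xt hrank sXt hcase.1 hcase.2
      have hb : ‖sXt.trunc r - Xt‖ ≤ sXt.s r := by
        rw [hdiff]
        refine le_trans (sandwich_spec_le _ _ _ sXt.orthU sXt.orthV) ?_
        apply spec_diagDec_le _ (sXt.nonneg r)
        intro i _ _
        by_cases hir : i < r
        · simp [hir, sXt.nonneg r]
        · simp only [hir, if_false, abs_neg, abs_of_nonneg (sXt.nonneg i)]
          exact sXt.anti r i (by omega)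
      exact hb.trans hw
    · have hb : ‖sXt.trunc r - Xt‖ ≤ 0 := by
        rw [hdiff]
        refine le_trans (sandwich_spec_le _ _ _ sXt.orthU sXt.orthV) ?_
        apply spec_diagDec_le _ le_rfl
        intro i hid hin
        have hir : i < r := by omega
        simp [hir]
      exact hb.trans (norm_nonneg _)
  have hspec : ‖sXt.trunc r - X‖ ≤ 2 * (ε * frobNorm X) := by
    have hdecomp : sXt.trunc r - X = (sXt.trunc r - Xt) + (Xt - X) := by abel
    calc ‖sXt.trunc r - X‖ ≤ ‖sXt.trunc r - Xt‖ + ‖Xt - X‖ := by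
          rw [hdecomp]; exact norm_add_le _ _
      _ ≤ ‖Xt - X‖ + ‖Xt - X‖ := add_le_add hYXt le_rfl
      _ ≤ (ε * frobNorm X) + (ε * frobNorm X) := add_le_add hE hE
      _ = 2 * (ε * frobNorm X) := by ring
  have hrank2 : (sXt.trunc r - X).rank ≤ 2 * r := by
    have h1 : (sXt.trunc r).rank ≤ r := by
      rw [SVDData.trunc]
      exact le_trans (Matrix.rank_mul_le_left _ _)
        (le_trans (Matrix.rank_mul_le_right _ _) (rank_diagTrunc_le d n r sXt.s))
    have := rank_sub_le (sXt.trunc r) X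
    omega
  have hfrob := frob_le_sqrt_rank_mul_spec (sXt.trunc r - X) (2 * r) hrank2
  have hcast : ((2 * r : ℕ) : ℝ) = 2 * (r : ℝ) := by push_cast; ring
  calc frobNorm (sXt.trunc r - X) ≤ Real.sqrt (2 * r) * ‖sXt.trunc r - X‖ := by
        rw [← hcast]; exact hfrob
    _ ≤ Real.sqrt (2 * r) * (2 * (ε * frobNorm X)) :=
        mul_le_mul_of_nonneg_left hspec (Real.sqrt_nonneg _)
    _ = 2 * Real.sqrt (2 * r) * ε * frobNorm X := by ring

end AuxERRB
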